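/- arXiv:1012.2040 — 2 statements merged into one kernel-verified Lean document; each statement's English description precedes it below -/
import Mathlib

section
/- Suppose κ is an inaccessible cardinal. Then κ is strongly compact if and only if TP(κ,λ) holds for every λ ≥ κ. -/
open Cardinal Set

/-! Combinatorial framework: `P_κ λ`, clubs, stationarity, thin/slender lists,
branches, the principles `TP`, `SP`, `ITP`, `ISP`, the ideals `I_IT`, `I_IS`,
ultrafilter notions, ordinal clubs, and square sequences. -/

/-- `P_κ λ`: the collection of subsets of (the set of ordinals below) `λ` of size `< κ`. -/
def Pk (κ lam : Cardinal.{0}) : Set (Set Ordinal.{0}) :=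
  {a | (∀ α ∈ a, α < lam.ord) ∧ #a < Cardinal.lift.{1} κ}

/-- `C` is club in `P_κ X` (represented by `S`, a collection of subsets of `X`):
cofinal in `(S, ⊆)` and closed under unions of `⊆`-increasing chains of length `< κ`. -/
def IsClubIn {X : Type*} (κ : Cardinal.{0}) (S : Set (Set X)) (C : Set (Set X)) : Prop :=
  C ⊆ S ∧ (∀ a ∈ S, ∃ c ∈ C, a ⊆ c) ∧
    ∀ δ : Ordinal.{0}, 0 < δ → δ.card < κ →
      ∀ f : Ordinal.{0} → Set X, (∀ β < δ, f β ∈ C) →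
        (∀ β γ, β ≤ γ → γ < δ → f β ⊆ f γ) →
        (⋃ β ∈ Set.Iio δ, f β) ∈ C

/-- `T` is stationary in `P_κ X`: it meets every club. -/
def IsStatIn {X : Type*} (κ : Cardinal.{0}) (S T : Set (Set X)) : Prop :=
  T ⊆ S ∧ ∀ C, IsClubIn κ S C → (T ∩ C).Nonempty

/-- A `P_κ λ`-list: `d a ⊆ a` for every `a ∈ P_κ λ`. -/
def IsList (κ lam : Cardinal) (d : Set Ordinal → Set Ordinal) : Prop :=
  ∀ a ∈ Pk κ lam, d a ⊆ a

/-- A thin `P_κ λ`-list: on a club of `c`'s, `|{d_a ∩ c : c ⊆ a ∈ P_κ λ}| < κ`. -/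
def IsThin (κ lam : Cardinal) (d : Set Ordinal → Set Ordinal) : Prop :=
  ∃ C, IsClubIn κ (Pk κ lam) C ∧
    ∀ c ∈ C, #{x : Set Ordinal | ∃ a ∈ Pk κ lam, c ⊆ a ∧ x = d a ∩ c} < Cardinal.lift.{1} κ

/-- `H_θ`: sets hereditarily of cardinality `< θ`. -/
def HSet (θ : Cardinal.{0}) : Set ZFSet.{0} :=
  {x | ZFSet.Hereditarily (fun y => #y.toSet < Cardinal.lift.{1} θ) x}

/-- `x` is the von Neumann ordinal corresponding to the ordinal `α`. -/
def IsOrdZF (x : ZFSet) (α : Ordinal) : Prop :=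
  x.IsOrdinal ∧ x.rank = α

/-- The ZFC set `x` codes the set of ordinals `b`. -/
def CodesSet (x : ZFSet) (b : Set Ordinal) : Prop :=
  ∀ y, y ∈ x ↔ ∃ α ∈ b, IsOrdZF y α

/-- `M ∩ λ`: the set of ordinals below `λ` whose von Neumann code lies in `M`. -/
def ordsOf (lam : Cardinal) (M : Set ZFSet) : Set Ordinal :=
  {α | α < lam.ord ∧ ∃ x ∈ M, IsOrdZF x α}

/-- A slender `P_κ λ`-list: for every sufficiently large regular `θ` there is a club
`C ⊆ P_κ H_θ` such that `d_{M ∩ λ} ∩ b ∈ M` for all `M ∈ C` and all countable `b ∈ M`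
with `b ⊆ λ`. -/
def IsSlender (κ lam : Cardinal) (d : Set Ordinal → Set Ordinal) : Prop :=
  ∃ θ₀ : Cardinal, ∀ θ, θ₀ ≤ θ → θ.IsRegular →
    ∃ C, IsClubIn κ {M : Set ZFSet.{0} | M ⊆ HSet θ ∧ #M < Cardinal.lift.{1} κ} C ∧
      ∀ M ∈ C, ∀ b : Set Ordinal, b.Countable → (∀ α ∈ b, α < lam.ord) →
        (∃ x ∈ M, CodesSet x b) →
        ∃ x ∈ M, CodesSet x (d (ordsOf lam M) ∩ b)

/-- `e` is a cofinal branch of the list `d`. -/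
def IsCofBranch (κ lam : Cardinal) (d : Set Ordinal → Set Ordinal) (e : Set Ordinal) : Prop :=
  (∀ α ∈ e, α < lam.ord) ∧
    ∀ a ∈ Pk κ lam, ∃ z ∈ Pk κ lam, a ⊆ z ∧ e ∩ a = d z ∩ a

/-- `e` is an ineffable branch of the list `d`. -/
def IsIneffBranch (κ lam : Cardinal) (d : Set Ordinal → Set Ordinal) (e : Set Ordinal) : Prop :=
  (∀ α ∈ e, α < lam.ord) ∧
    IsStatIn κ (Pk κ lam) {a ∈ Pk κ lam | e ∩ a = d a}

/-- `TP(κ,λ)`: every thin `P_κ λ`-list has a cofinal branch. -/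
def TP (κ lam : Cardinal) : Prop :=
  ∀ d, IsList κ lam d → IsThin κ lam d → ∃ e, IsCofBranch κ lam d e

/-- `SP(κ,λ)`: every slender `P_κ λ`-list has a cofinal branch. -/
def SP (κ lam : Cardinal) : Prop :=
  ∀ d, IsList κ lam d → IsSlender κ lam d → ∃ e, IsCofBranch κ lam d e

/-- `ITP(κ,λ)`: every thin `P_κ λ`-list has an ineffable branch. -/
def ITP (κ lam : Cardinal) : Prop :=
  ∀ d, IsList κ lam d → IsThin κ lam d → ∃ e, IsIneffBranch κ lam d e

/-- `ISP(κ,λ)`: every slender `P_κ λ`-list has an ineffable branch. -/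
def ISP (κ lam : Cardinal) : Prop :=
  ∀ d, IsList κ lam d → IsSlender κ lam d → ∃ e, IsIneffBranch κ lam d e

/-- The list `d` is `A`-effable. -/
def IsEffable (κ lam : Cardinal) (d : Set Ordinal → Set Ordinal) (A : Set (Set Ordinal)) : Prop :=
  ∀ S, S ⊆ A → IsStatIn κ (Pk κ lam) S →
    ∃ a ∈ S, ∃ b ∈ S, a ⊆ b ∧ d a ≠ d b ∩ a

/-- The ideal `I_IT[κ,λ]`. -/
def IIT (κ lam : Cardinal) : Set (Set (Set Ordinal)) :=
  {A | A ⊆ Pk κ lam ∧ ∃ d, IsList κ lam d ∧ IsThin κ lam d ∧ IsEffable κ lam d A}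

/-- The ideal `I_IS[κ,λ]`. -/
def IIS (κ lam : Cardinal) : Set (Set (Set Ordinal)) :=
  {A | A ⊆ Pk κ lam ∧ ∃ d, IsList κ lam d ∧ IsSlender κ lam d ∧ IsEffable κ lam d A}

/-- The filter `F_IT[κ,λ]` dual to `I_IT[κ,λ]`. -/
def FIT (κ lam : Cardinal) : Set (Set (Set Ordinal)) :=
  {A | A ⊆ Pk κ lam ∧ (Pk κ lam \ A) ∈ IIT κ lam}

/-- `U` is an ultrafilter on the set `X`. -/
def IsUFOn {α : Type*} (X : Set α) (U : Set (Set α)) : Prop :=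
  (∀ A ∈ U, A ⊆ X) ∧ X ∈ U ∧ ∅ ∉ U ∧
    (∀ A ∈ U, ∀ B, A ⊆ B → B ⊆ X → B ∈ U) ∧
    (∀ A ∈ U, ∀ B ∈ U, A ∩ B ∈ U) ∧
    (∀ A, A ⊆ X → (A ∈ U ∨ X \ A ∈ U))

/-- `U` is `κ`-complete: closed under intersections of fewer than `κ` of its members. -/
def KComplete (κ : Cardinal.{0}) (X : Set (Set Ordinal)) (U : Set (Set (Set Ordinal))) : Prop :=
  ∀ s : Set (Set (Set Ordinal)), s ⊆ U → #s < Cardinal.lift.{1} κ → X ∩ ⋂₀ s ∈ U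

/-- `U` is fine on `P_κ λ`. -/
def Fine (κ lam : Cardinal) (U : Set (Set (Set Ordinal))) : Prop :=
  ∀ x < lam.ord, {a ∈ Pk κ lam | x ∈ a} ∈ U

/-- `U` is normal on `P_κ λ`: closed under diagonal intersections. -/
def NormalUF (κ lam : Cardinal) (U : Set (Set (Set Ordinal))) : Prop :=
  ∀ A : Ordinal → Set (Set Ordinal), (∀ x < lam.ord, A x ∈ U) →
    {a ∈ Pk κ lam | ∀ x ∈ a, a ∈ A x} ∈ U

/-- `κ` is strongly compact: for every `λ ≥ κ` there is a `κ`-complete fine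
ultrafilter on `P_κ λ`. -/
def IsStronglyCompact (κ : Cardinal) : Prop :=
  ∀ lam : Cardinal, κ ≤ lam →
    ∃ U, IsUFOn (Pk κ lam) U ∧ KComplete κ (Pk κ lam) U ∧ Fine κ lam U

/-- `κ` is supercompact: for every `λ ≥ κ` there is a `κ`-complete normal fine
ultrafilter on `P_κ λ`. -/
def IsSupercompact (κ : Cardinal) : Prop :=
  ∀ lam : Cardinal, κ ≤ lam →
    ∃ U, IsUFOn (Pk κ lam) U ∧ KComplete κ (Pk κ lam) U ∧ Fine κ lam U ∧ NormalUF κ lam U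

/-- `C` is club in the ordinal `o`: unbounded in `o` and closed. -/
def OrdClub (o : Ordinal) (C : Set Ordinal) : Prop :=
  C ⊆ Set.Iio o ∧ (∀ β < o, ∃ γ ∈ C, β ≤ γ) ∧
    ∀ α < o, 0 < α → sSup (C ∩ Set.Iio α) = α → α ∈ C

/-- `S` is stationary in the ordinal `o`. -/
def OrdStat (o : Ordinal) (S : Set Ordinal) : Prop :=
  S ⊆ Set.Iio o ∧ ∀ C, OrdClub o C → (S ∩ C).Nonempty

/-- `δ` is a limit point of `C`: `δ > 0` and `δ = sup (C ∩ δ)`. -/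
def IsLimPt (C : Set Ordinal) (δ : Ordinal) : Prop :=
  0 < δ ∧ sSup (C ∩ Set.Iio δ) = δ

/-- `κ` is an ineffable cardinal. -/
def IsIneffableCard (κ : Cardinal) : Prop :=
  ∀ d : Ordinal → Set Ordinal, (∀ α < κ.ord, d α ⊆ Set.Iio α) →
    ∃ e ⊆ Set.Iio κ.ord, OrdStat κ.ord {α | α < κ.ord ∧ e ∩ Set.Iio α = d α}

/-- A `□_E(κ,λ)`-sequence. -/
def IsSquareSeq (κ : Cardinal.{0}) (lam : Ordinal.{0}) (E : Set Ordinal.{0})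
    (𝒞 : Ordinal.{0} → Set (Set Ordinal.{0})) : Prop :=
  (∀ α, Order.IsSuccLimit α → α ∈ E → α < lam →
    ((𝒞 α).Nonempty ∧ #(𝒞 α) < Cardinal.lift.{1} κ) ∧
      ∀ C ∈ 𝒞 α, OrdClub α C ∧ ∀ β, IsLimPt C β → β ∈ E → C ∩ Set.Iio β ∈ 𝒞 β) ∧
  ¬∃ D, OrdClub lam D ∧ ∀ δ, IsLimPt D δ → δ ∈ E → δ < lam → D ∩ Set.Iio δ ∈ 𝒞 δ

/-- `□_E(κ,λ)` holds. -/
def SquareE (κ : Cardinal.{0}) (lam : Ordinal.{0}) (E : Set Ordinal.{0}) : Prop :=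
  ∃ 𝒞, IsSquareSeq κ lam E 𝒞

/-- `(a, ∈) ≺ (λ, ∈)`: `a` is an elementary substructure of the ordinals below `lam`
(with `∈`, equivalently the order, as the only relation). -/
def ElemSubOrd (lam : Ordinal) (a : Set Ordinal) : Prop :=
  letI := FirstOrder.Language.orderStructure ↥a
  letI := FirstOrder.Language.orderStructure ↥(Set.Iio lam)
  ∃ h : a ⊆ Set.Iio lam,
    ∀ (n : ℕ) (φ : FirstOrder.Language.order.Formula (Fin n)) (v : Fin n → ↥a),
      φ.Realize v ↔ φ.Realize fun i => Set.inclusion h (v i)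

/-- `P'_κ λ`: the members `a` of `P_κ λ` with `a ∩ κ` an ordinal and `(a,∈) ≺ (λ,∈)`. -/
def P'k (κ lam : Cardinal) : Set (Set Ordinal) :=
  {a ∈ Pk κ lam | (∃ β : Ordinal, a ∩ Set.Iio κ.ord = Set.Iio β) ∧ ElemSubOrd lam.ord a}

/-- `κ_a`: the ordinal `a ∩ κ` (for `a ∈ P'_κ λ`). -/
noncomputable def kapOf (κ : Cardinal) (a : Set Ordinal) : Ordinal :=
  sInf {β : Ordinal | a ∩ Set.Iio κ.ord ⊆ Set.Iio β}

lemma my_isRegular_lift {κ : Cardinal.{0}} (h : κ.IsRegular) :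
    (Cardinal.lift.{1} κ).IsRegular := by
  constructor
  · rw [← Cardinal.lift_aleph0.{1,0}]
    exact Cardinal.lift_le.2 h.1
  · rw [← Cardinal.lift_ord, ← Ordinal.lift_cof]
    exact Cardinal.lift_le.2 h.2

lemma my_aleph0_le_lift {κ : Cardinal.{0}} (h : ℵ₀ ≤ κ) : ℵ₀ ≤ Cardinal.lift.{1} κ := by
  rw [← Cardinal.lift_aleph0.{1,0}]
  exact Cardinal.lift_le.2 h

lemma my_pk_club {κ : Cardinal.{0}} (hreg : κ.IsRegular) (μ : Cardinal.{0}) :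
    IsClubIn κ (Pk κ μ) (Pk κ μ) := by
  refine ⟨subset_rfl, fun a ha => ⟨a, ha, subset_rfl⟩, ?_⟩
  intro δ hδ0 hδ f hf _
  constructor
  · intro α hα
    simp only [Set.mem_iUnion] at hα
    obtain ⟨β, hβ, hmem⟩ := hα
    exact (hf β hβ).1 α hmem
  · have heq : (⋃ β ∈ Set.Iio δ, f β) = ⋃ β : ↥(Set.Iio δ), f ↑β := by
      rw [Set.biUnion_eq_iUnion]
    rw [heq]
    have hι : #(↥(Set.Iio δ)) < Cardinal.lift.{1} κ := by
      rw [Ordinal.mk_Iio_ordinal]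
      exact Cardinal.lift_lt.2 hδ
    calc #(⋃ β : ↥(Set.Iio δ), f ↑β) ≤ #(↥(Set.Iio δ)) * ⨆ β : ↥(Set.Iio δ), #(f ↑β) :=
          Cardinal.mk_iUnion_le _
      _ < Cardinal.lift.{1} κ := by
          apply Cardinal.mul_lt_of_lt (my_aleph0_le_lift hreg.1) hι
          exact Cardinal.iSup_lt_of_isRegular (my_isRegular_lift hreg) hι
            (fun β => (hf β β.2).2)

lemma my_small_powerset {κ : Cardinal.{0}} (hsl : κ.IsStrongLimit) {c : Set Ordinal.{0}}
    (hc : #c < Cardinal.lift.{1} κ) {T : Set (Set Ordinal.{0})} (hT : ∀ x ∈ T, x ⊆ c) :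
    Cardinal.mk T < Cardinal.lift.{1} κ := by
  have h1 : #T ≤ #(↥(𝒫 c)) := Cardinal.mk_le_mk_of_subset hT
  rw [Cardinal.mk_powerset] at h1
  obtain ⟨c0, hc0, hlift⟩ := Cardinal.lt_lift_iff.1 hc
  refine h1.trans_lt ?_
  rw [← hlift, ← Cardinal.lift_two_power]
  exact Cardinal.lift_lt.2 (hsl.two_power_lt hc0)

lemma my_every_list_thin {κ : Cardinal.{0}} (hκ : κ.IsInaccessible) (μ : Cardinal.{0})
    (d : Set Ordinal → Set Ordinal) : IsThin κ μ d := by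
  refine ⟨Pk κ μ, my_pk_club hκ.isRegular μ, fun c hc => ?_⟩
  refine my_small_powerset hκ.isStrongLimit hc.2 ?_
  rintro x ⟨a, _, _, rfl⟩
  exact Set.inter_subset_right

lemma my_tp_of_uf {κ lam : Cardinal.{0}} {U : Set (Set (Set Ordinal))}
    (hU : IsUFOn (Pk κ lam) U) (hcomp : KComplete κ (Pk κ lam) U) (hfine : Fine κ lam U) :
    TP κ lam := by
  obtain ⟨hUsub, hXU, hempty, hup, hint, hultra⟩ := hU
  have hne : ∀ A ∈ U, A.Nonempty := by
    intro A hA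
    rcases Set.eq_empty_or_nonempty A with rfl | h
    · exact absurd hA hempty
    · exact h
  -- hats are in U
  have hhat : ∀ c ∈ Pk κ lam, {a | a ∈ Pk κ lam ∧ c ⊆ a} ∈ U := by
    intro c hc
    set s := (fun x : Ordinal => {a | a ∈ Pk κ lam ∧ x ∈ a}) '' c with hs
    have hsU : s ⊆ U := by
      rintro _ ⟨x, hx, rfl⟩
      exact hfine x (hc.1 x hx)
    have hscard : #s < Cardinal.lift.{1} κ := Cardinal.mk_image_le.trans_lt hc.2
    have := hcomp s hsU hscard
    have heq : Pk κ lam ∩ ⋂₀ s = {a | a ∈ Pk κ lam ∧ c ⊆ a} := by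
      ext a
      constructor
      · rintro ⟨haPk, hall⟩
        refine ⟨haPk, fun x hx => ?_⟩
        exact (hall _ ⟨x, hx, rfl⟩).2
      · rintro ⟨haPk, hsubc⟩
        refine ⟨haPk, ?_⟩
        rintro _ ⟨x, hx, rfl⟩
        exact ⟨haPk, hsubc hx⟩
    rwa [heq] at this
  intro d hlist hthin
  obtain ⟨C, hC, hthinC⟩ := hthin
  -- partition lemma
  have hpart : ∀ c ∈ C, ∃ v, {a | a ∈ Pk κ lam ∧ c ⊆ a ∧ d a ∩ c = v} ∈ U := by
    intro c hcC
    have hcPk : c ∈ Pk κ lam := hC.1 hcC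
    by_contra hcon
    push_neg at hcon
    set V := {x : Set Ordinal | ∃ a ∈ Pk κ lam, c ⊆ a ∧ x = d a ∩ c} with hV
    set s := (fun v : Set Ordinal => Pk κ lam \ {a | a ∈ Pk κ lam ∧ c ⊆ a ∧ d a ∩ c = v}) '' V
      with hs
    have hsU : s ⊆ U := by
      rintro _ ⟨v, hv, rfl⟩
      rcases hultra {a | a ∈ Pk κ lam ∧ c ⊆ a ∧ d a ∩ c = v} (fun a ha => ha.1) with h | h
      · exact absurd h (hcon v)
      · exact h
    have hscard : #s < Cardinal.lift.{1} κ :=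
      Cardinal.mk_image_le.trans_lt (hthinC c hcC)
    have h1 := hcomp s hsU hscard
    have h2 := hint _ h1 _ (hhat c hcPk)
    obtain ⟨a, ⟨haPk', hall⟩, haPk, hca⟩ := hne _ h2
    have hv : (d a ∩ c) ∈ V := ⟨a, haPk, hca, rfl⟩
    have := hall _ ⟨d a ∩ c, hv, rfl⟩
    exact this.2 ⟨haPk, hca, rfl⟩
  -- the branch
  set e := {α : Ordinal | α < lam.ord ∧ {a | a ∈ Pk κ lam ∧ α ∈ d a} ∈ U} with he
  have hkey : ∀ c ∈ C, ∀ v, {a | a ∈ Pk κ lam ∧ c ⊆ a ∧ d a ∩ c = v} ∈ U → e ∩ c = v := by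
    intro c hcC v hv
    have hcPk : c ∈ Pk κ lam := hC.1 hcC
    have hvsub : v ⊆ c := by
      obtain ⟨a, _, _, rfl⟩ := hne _ hv
      exact Set.inter_subset_right
    ext α
    constructor
    · rintro ⟨⟨hαlam, hαU⟩, hαc⟩
      obtain ⟨a, ⟨haPk, hαda⟩, ⟨_, hca, hdac⟩⟩ := hne _ (hint _ hαU _ hv)
      rw [← hdac]
      exact ⟨hαda, hαc⟩
    · intro hαv
      have hαc : α ∈ c := hvsub hαv
      refine ⟨⟨hcPk.1 α hαc, ?_⟩, hαc⟩
      refine hup _ hv {a | a ∈ Pk κ lam ∧ α ∈ d a} ?_ (fun a ha => ha.1)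
      rintro a ⟨haPk, hca, hdac⟩
      refine ⟨haPk, ?_⟩
      have : α ∈ d a ∩ c := by rw [hdac]; exact hαv
      exact this.1
  refine ⟨e, fun α hα => hα.1, ?_⟩
  intro a ha
  obtain ⟨c, hcC, hac⟩ := hC.2.1 a ha
  obtain ⟨v, hv⟩ := hpart c hcC
  obtain ⟨z, hzPk, hcz, hdzc⟩ := hne _ hv
  refine ⟨z, hzPk, hac.trans hcz, ?_⟩
  have h1 : e ∩ c = v := hkey c hcC v hv
  calc e ∩ a = (e ∩ c) ∩ a := by
        rw [Set.inter_assoc, Set.inter_eq_self_of_subset_right hac]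
    _ = (d z ∩ c) ∩ a := by rw [h1, hdzc]
    _ = d z ∩ a := by rw [Set.inter_assoc, Set.inter_eq_self_of_subset_right hac]

lemma my_compact_of_tp {κ : Cardinal.{0}} (hκ : κ.IsInaccessible)
    (h : ∀ lam : Cardinal.{0}, κ ≤ lam → TP κ lam) : IsStronglyCompact κ := by
  classical
  intro lam hlam
  set μ : Cardinal.{0} := (2 : Cardinal) ^ ((2 : Cardinal) ^ lam) with hμ
  have hl1 : lam ≤ 2 ^ lam := (Cardinal.cantor lam).le
  have hl2 : (2:Cardinal) ^ lam ≤ μ := (Cardinal.cantor ((2:Cardinal) ^ lam)).le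
  have hlamμ : lam ≤ μ := hl1.trans hl2
  have hκμ : κ ≤ μ := hlam.trans hlamμ
  have hord : lam.ord ≤ μ.ord := Cardinal.ord_le_ord.2 hlamμ
  -- a surjection-like coding of subsets of Pk κ lam by ordinals < μ.ord
  have hcard : #(↥{X : Set (Set Ordinal.{0}) | X ⊆ Pk κ lam}) ≤ #(↥(Set.Iio μ.ord)) := by
    have h1 : #(↥{X : Set (Set Ordinal.{0}) | X ⊆ Pk κ lam}) = 2 ^ #(↥(Pk κ lam)) :=
      Cardinal.mk_powerset _
    have h2 : #(↥(Pk κ lam)) ≤ Cardinal.lift.{1} (2 ^ lam) := by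
      have hsub : Pk κ lam ⊆ 𝒫 (Set.Iio lam.ord) := fun a ha => ha.1
      refine (Cardinal.mk_le_mk_of_subset hsub).trans ?_
      rw [Cardinal.mk_powerset, Ordinal.mk_Iio_ordinal, Cardinal.card_ord,
        ← Cardinal.lift_two_power]
    have h3 : (2:Cardinal.{1}) ^ #(↥(Pk κ lam)) ≤ 2 ^ Cardinal.lift.{1} (2 ^ lam) :=
      Cardinal.power_le_power_left (by norm_num) h2
    rw [Ordinal.mk_Iio_ordinal, Cardinal.card_ord, h1]
    refine h3.trans ?_
    rw [← Cardinal.lift_two_power]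
  obtain ⟨f⟩ := Cardinal.le_def _ _ |>.1 hcard
  set F : Ordinal → Set (Set Ordinal) := fun α =>
    if hex : ∃ X : ↥{X : Set (Set Ordinal.{0}) | X ⊆ Pk κ lam}, ((f X : ↥(Set.Iio μ.ord)) : Ordinal) = α
    then (hex.choose : ↥{X : Set (Set Ordinal.{0}) | X ⊆ Pk κ lam}).1 else ∅ with hF
  have hFsurj : ∀ X : Set (Set Ordinal), X ⊆ Pk κ lam → ∃ α, α < μ.ord ∧ F α = X := by
    intro X hX
    refine ⟨↑(f ⟨X, hX⟩), (f ⟨X, hX⟩).2, ?_⟩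
    have hex : ∃ Y : ↥{X : Set (Set Ordinal.{0}) | X ⊆ Pk κ lam},
        ((f Y : ↥(Set.Iio μ.ord)) : Ordinal) = ↑(f ⟨X, hX⟩) := ⟨⟨X, hX⟩, rfl⟩
    rw [hF]
    simp only [dif_pos hex]
    have := hex.choose_spec
    have : hex.choose = ⟨X, hX⟩ := f.injective (Subtype.coe_injective this)
    rw [this]
  set lamPart : Set Ordinal → Set Ordinal := fun a => {γ ∈ a | γ < lam.ord} with hlp
  set d : Set Ordinal → Set Ordinal := fun a => {α ∈ a | lamPart a ∈ F α} with hd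
  have hlist : IsList κ μ d := fun a _ => Set.sep_subset _ _
  obtain ⟨e, he1, he2⟩ := h μ hκμ d hlist (my_every_list_thin hκ μ d)
  have hlpPk : ∀ z ∈ Pk κ μ, lamPart z ∈ Pk κ lam := by
    intro z hz
    exact ⟨fun γ hγ => hγ.2, (Cardinal.mk_le_mk_of_subset (Set.sep_subset _ _)).trans_lt hz.2⟩
  have hfin : ∀ t : Set Ordinal, t.Finite → (∀ α ∈ t, α < μ.ord) → t ∈ Pk κ μ := by
    intro t htf hb
    exact ⟨hb, htf.lt_aleph0.trans_le (my_aleph0_le_lift hκ.1.le)⟩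
  have K : ∀ t ∈ Pk κ μ, ∃ z, z ∈ Pk κ μ ∧ t ⊆ z ∧ lamPart z ∈ Pk κ lam ∧
      ∀ α ∈ t, (α ∈ e ↔ lamPart z ∈ F α) := by
    intro t ht
    obtain ⟨z, hz, hsub, heq⟩ := he2 t ht
    refine ⟨z, hz, hsub, hlpPk z hz, fun α hα => ?_⟩
    constructor
    · intro hαe
      have h1 : α ∈ d z ∩ t := heq ▸ (⟨hαe, hα⟩ : α ∈ e ∩ t)
      exact h1.1.2
    · intro hmem
      have h1 : α ∈ d z ∩ t := ⟨⟨hsub hα, hmem⟩, hα⟩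
      rw [← heq] at h1
      exact h1.1
  set U : Set (Set (Set Ordinal)) :=
    {A | A ⊆ Pk κ lam ∧ ∃ α, α < μ.ord ∧ F α = A ∧ α ∈ e} with hUdef
  have hXU : Pk κ lam ∈ U := by
    obtain ⟨α₀, hα₀, hFα₀⟩ := hFsurj (Pk κ lam) subset_rfl
    obtain ⟨z, hz, hsub, hlpz, hiff⟩ := K {α₀}
      (hfin _ (Set.finite_singleton _) (by simpa using hα₀))
    exact ⟨subset_rfl, α₀, hα₀, hFα₀,
      (hiff α₀ (Set.mem_singleton _)).2 (by rw [hFα₀]; exact hlpz)⟩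
  have hemptyU : ∅ ∉ U := by
    rintro ⟨-, α, hα, hFα, hαe⟩
    obtain ⟨z, hz, hsub, hlpz, hiff⟩ := K {α}
      (hfin _ (Set.finite_singleton _) (by simpa using hα))
    have h1 := (hiff α (Set.mem_singleton _)).1 hαe
    rw [hFα] at h1
    exact h1
  have hupU : ∀ A ∈ U, ∀ B, A ⊆ B → B ⊆ Pk κ lam → B ∈ U := by
    rintro A ⟨hAX, α, hα, hFα, hαe⟩ B hAB hBX
    obtain ⟨β, hβ, hFβ⟩ := hFsurj B hBX
    obtain ⟨z, hz, hsub, hlpz, hiff⟩ := K {α, β}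
      (hfin _ ((Set.finite_singleton β).insert α)
        (by intro y hy; rcases hy with rfl | rfl; exacts [hα, hβ]))
    have h1 : lamPart z ∈ F α := (hiff α (Set.mem_insert _ _)).1 hαe
    rw [hFα] at h1
    exact ⟨hBX, β, hβ, hFβ,
      (hiff β (Set.mem_insert_of_mem _ rfl)).2 (by rw [hFβ]; exact hAB h1)⟩
  have hintU : ∀ A ∈ U, ∀ B ∈ U, A ∩ B ∈ U := by
    rintro A ⟨hAX, α, hα, hFα, hαe⟩ B ⟨hBX, β, hβ, hFβ, hβe⟩
    obtain ⟨γ, hγ, hFγ⟩ := hFsurj (A ∩ B) (Set.inter_subset_left.trans hAX)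
    obtain ⟨z, hz, hsub, hlpz, hiff⟩ := K {α, β, γ}
      (hfin _ (((Set.finite_singleton γ).insert β).insert α)
        (by intro y hy; rcases hy with rfl | rfl | rfl; exacts [hα, hβ, hγ]))
    have h1 : lamPart z ∈ F α := (hiff α (Set.mem_insert _ _)).1 hαe
    have h2 : lamPart z ∈ F β :=
      (hiff β (Set.mem_insert_of_mem _ (Set.mem_insert _ _))).1 hβe
    rw [hFα] at h1
    rw [hFβ] at h2
    refine ⟨Set.inter_subset_left.trans hAX, γ, hγ, hFγ, ?_⟩
    exact (hiff γ (Set.mem_insert_of_mem _ (Set.mem_insert_of_mem _ rfl))).2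
      (by rw [hFγ]; exact ⟨h1, h2⟩)
  have hultraU : ∀ A, A ⊆ Pk κ lam → A ∈ U ∨ Pk κ lam \ A ∈ U := by
    intro A hAX
    obtain ⟨α, hα, hFα⟩ := hFsurj A hAX
    obtain ⟨β, hβ, hFβ⟩ := hFsurj (Pk κ lam \ A) Set.diff_subset
    obtain ⟨z, hz, hsub, hlpz, hiff⟩ := K {α, β}
      (hfin _ ((Set.finite_singleton β).insert α)
        (by intro y hy; rcases hy with rfl | rfl; exacts [hα, hβ]))
    by_cases hm : lamPart z ∈ A
    · exact Or.inl ⟨hAX, α, hα, hFα,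
        (hiff α (Set.mem_insert _ _)).2 (by rw [hFα]; exact hm)⟩
    · exact Or.inr ⟨Set.diff_subset, β, hβ, hFβ,
        (hiff β (Set.mem_insert_of_mem _ rfl)).2 (by rw [hFβ]; exact ⟨hlpz, hm⟩)⟩
  have hcompU : KComplete κ (Pk κ lam) U := by
    intro s hsU hscard
    have hchoice : ∀ A : ↥s, ∃ α, α < μ.ord ∧ F α = ↑A ∧ α ∈ e := fun A => (hsU A.2).2
    choose g hg1 hg2 hg3 using hchoice
    have hXsub : Pk κ lam ∩ ⋂₀ s ⊆ Pk κ lam := Set.inter_subset_left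
    obtain ⟨γ, hγ, hFγ⟩ := hFsurj _ hXsub
    have htPk : (insert γ (Set.range g) : Set Ordinal) ∈ Pk κ μ := by
      constructor
      · rintro α (rfl | ⟨A, rfl⟩)
        · exact hγ
        · exact hg1 A
      · refine Cardinal.mk_insert_le.trans_lt ?_
        refine Cardinal.add_lt_of_lt (my_aleph0_le_lift hκ.1.le) ?_ ?_
        · exact Cardinal.mk_range_le.trans_lt hscard
        · exact Cardinal.one_lt_aleph0.trans_le (my_aleph0_le_lift hκ.1.le)
    obtain ⟨z, hz, hsub, hlpz, hiff⟩ := K _ htPk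
    have hz2 : ∀ A ∈ s, lamPart z ∈ A := by
      intro A hA
      have h1 := (hiff (g ⟨A, hA⟩)
        (Set.mem_insert_of_mem _ ⟨⟨A, hA⟩, rfl⟩)).1 (hg3 ⟨A, hA⟩)
      rwa [hg2 ⟨A, hA⟩] at h1
    have hγe : γ ∈ e := (hiff γ (Set.mem_insert _ _)).2
      (by rw [hFγ]; exact ⟨hlpz, fun A hA => hz2 A hA⟩)
    exact ⟨hXsub, γ, hγ, hFγ, hγe⟩
  have hfineU : Fine κ lam U := by
    intro x hx
    have hAX : {a ∈ Pk κ lam | x ∈ a} ⊆ Pk κ lam := fun a ha => ha.1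
    obtain ⟨α, hα, hFα⟩ := hFsurj _ hAX
    have hxμ : x < μ.ord := hx.trans_le hord
    obtain ⟨z, hz, hsub, hlpz, hiff⟩ := K {α, x}
      (hfin _ ((Set.finite_singleton x).insert α)
        (by intro y hy; rcases hy with rfl | rfl; exacts [hα, hxμ]))
    have hxz : x ∈ lamPart z := ⟨hsub (Set.mem_insert_of_mem _ rfl), hx⟩
    exact ⟨hAX, α, hα, hFα,
      (hiff α (Set.mem_insert _ _)).2 (by rw [hFα]; exact ⟨hlpz, hxz⟩)⟩
  exact ⟨U, ⟨fun A hA => hA.1, hXU, hemptyU, hupU, hintU, hultraU⟩, hcompU, hfineU⟩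


theorem stronglyCompact_iff_TP (κ : Cardinal.{0}) (hκ : κ.IsInaccessible) :
    IsStronglyCompact κ ↔ ∀ lam : Cardinal.{0}, κ ≤ lam → TP κ lam := by
  constructor
  · intro hsc lam hlam
    obtain ⟨U, hU, hcomp, hfine⟩ := hsc lam hlam
    exact my_tp_of_uf hU hcomp hfine
  · exact my_compact_of_tp hκ
end

section
/- Let κ be a regular uncountable cardinal and λ ≥ κ a cardinal. Then I_IT[κ,λ] is a normal ideal on P_κλ: it contains every nonstationary subset of P_κλ, is closed under subsets and finite unions, and whenever D ⊆ P_κλ and g : D → λ is regressive (meaning g(a) ∈ a for every nonempty a ∈ D) with g⁻¹{γ} ∈ I_IT[κ,λ] for every γ < λ, then D ∈ I_IT[κ,λ]. -/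
open Cardinal Set

namespace IITAux

variable {κ lam : Cardinal.{0}}

theorem isRegular_lift (h : κ.IsRegular) : (Cardinal.lift.{1} κ).IsRegular :=
  ⟨by simpa using Cardinal.lift_le.{1}.2 h.1,
   by rw [← Cardinal.lift_ord, ← Ordinal.lift_cof]; exact Cardinal.lift_le.2 h.2⟩

theorem mk_biUnion_lt (hreg : κ.IsRegular) {α β : Type 1} {s : Set α} {f : α → Set β}
    (hs : #s < Cardinal.lift.{1} κ) (hf : ∀ i ∈ s, #(f i) < Cardinal.lift.{1} κ) :
    #(⋃ i ∈ s, f i) < Cardinal.lift.{1} κ := by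
  rw [Set.biUnion_eq_iUnion]
  refine (Cardinal.mk_iUnion_le _).trans_lt ?_
  have h0 : ℵ₀ ≤ Cardinal.lift.{1} κ := (isRegular_lift hreg).1
  refine Cardinal.mul_lt_of_lt h0 hs ?_
  exact Cardinal.iSup_lt_of_isRegular (isRegular_lift hreg) hs fun i => hf i i.2

theorem club_omega_union {X : Type*} {S C : Set (Set X)} (hunc : ℵ₀ < κ)
    (hC : IsClubIn κ S C) (u : ℕ → Set X) (hmem : ∀ n, u n ∈ C)
    (hmono : ∀ n, u n ⊆ u (n + 1)) : (⋃ n, u n) ∈ C := by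
  have hm : ∀ {m n : ℕ}, m ≤ n → u m ⊆ u n := by
    intro m n h
    induction h with
    | refl => exact subset_rfl
    | step _ ih => exact Set.Subset.trans ih (hmono _)
  have key := hC.2.2 Ordinal.omega0 Ordinal.omega0_pos
    (by rw [Ordinal.card_omega0]; exact hunc)
    (fun β => u (Cardinal.toNat β.card)) (fun β _ => hmem _) ?_
  · convert key using 1
    apply Set.Subset.antisymm
    · intro x hx
      obtain ⟨n, hn⟩ := Set.mem_iUnion.1 hx
      refine Set.mem_biUnion (Ordinal.nat_lt_omega0 n) ?_
      simpa using hn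
    · intro x hx
      obtain ⟨β, _, hβ⟩ := Set.mem_iUnion₂.1 hx
      exact Set.mem_iUnion.2 ⟨_, hβ⟩
  · intro β γ hβγ hγ
    have hβ : β < Ordinal.omega0 := lt_of_le_of_lt hβγ hγ
    obtain ⟨m, rfl⟩ := Ordinal.lt_omega0.1 hβ
    obtain ⟨n, rfl⟩ := Ordinal.lt_omega0.1 hγ
    have : m ≤ n := by exact_mod_cast hβγ
    simpa using hm this

theorem Pk_club (hreg : κ.IsRegular) : IsClubIn κ (Pk κ lam) (Pk κ lam) := by
  refine ⟨subset_rfl, fun a ha => ⟨a, ha, subset_rfl⟩, ?_⟩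
  intro δ _ hδκ f hf _
  constructor
  · intro α hα
    obtain ⟨β, hβ, h⟩ := Set.mem_iUnion₂.1 hα
    exact (hf β hβ).1 α h
  · refine mk_biUnion_lt hreg ?_ fun β hβ => (hf β hβ).2
    rw [Ordinal.mk_Iio_ordinal]
    exact Cardinal.lift_lt.2 hδκ

theorem club_inter (hunc : ℵ₀ < κ) {S C₁ C₂ : Set (Set Ordinal.{0})}
    (h₁ : IsClubIn κ S C₁) (h₂ : IsClubIn κ S C₂) : IsClubIn κ S (C₁ ∩ C₂) := by
  have e₁ : ∀ a : Set Ordinal, ∃ c, a ∈ S → c ∈ C₁ ∧ a ⊆ c := by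
    intro a
    by_cases h : a ∈ S
    · obtain ⟨c, hc, hac⟩ := h₁.2.1 a h; exact ⟨c, fun _ => ⟨hc, hac⟩⟩
    · exact ⟨a, fun h' => absurd h' h⟩
  have e₂ : ∀ a : Set Ordinal, ∃ c, a ∈ S → c ∈ C₂ ∧ a ⊆ c := by
    intro a
    by_cases h : a ∈ S
    · obtain ⟨c, hc, hac⟩ := h₂.2.1 a h; exact ⟨c, fun _ => ⟨hc, hac⟩⟩
    · exact ⟨a, fun h' => absurd h' h⟩
  choose G₁ hG₁ using e₁
  choose G₂ hG₂ using e₂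
  refine ⟨fun c hc => h₁.1 hc.1, ?_, ?_⟩
  · intro a ha
    set P : ℕ → Set Ordinal := fun n => Nat.rec (G₁ a) (fun _ b => G₁ (G₂ b)) n with hP
    have hPmem : ∀ n, P n ∈ C₁ := by
      intro n
      induction n with
      | zero => exact (hG₁ a ha).1
      | succ n ih =>
        exact (hG₁ _ (h₂.1 (hG₂ _ (h₁.1 ih)).1)).1
    have hQmem : ∀ n, G₂ (P n) ∈ C₂ := fun n => (hG₂ _ (h₁.1 (hPmem n))).1
    have hPQ : ∀ n, P n ⊆ G₂ (P n) := fun n => (hG₂ _ (h₁.1 (hPmem n))).2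
    have hQP : ∀ n, G₂ (P n) ⊆ P (n + 1) := fun n =>
      (hG₁ _ (h₂.1 (hQmem n))).2
    have hPmono : ∀ n, P n ⊆ P (n + 1) := fun n => (hPQ n).trans (hQP n)
    have hU₁ : (⋃ n, P n) ∈ C₁ := club_omega_union hunc h₁ P hPmem hPmono
    have hQmono : ∀ n, G₂ (P n) ⊆ G₂ (P (n + 1)) := fun n => (hQP n).trans (hPQ (n + 1))
    have hU₂ : (⋃ n, G₂ (P n)) ∈ C₂ := club_omega_union hunc h₂ _ hQmem hQmono
    have heq : (⋃ n, G₂ (P n)) = ⋃ n, P n := by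
      apply Set.Subset.antisymm
      · exact Set.iUnion_mono' fun n => ⟨n + 1, hQP n⟩
      · exact Set.iUnion_mono' fun n => ⟨n, hPQ n⟩
    rw [heq] at hU₂
    exact ⟨⋃ n, P n, ⟨hU₁, hU₂⟩, (hG₁ a ha).2.trans (Set.subset_iUnion P 0)⟩
  · intro δ h0 hδ f hf hmono
    exact ⟨h₁.2.2 δ h0 hδ f (fun β hβ => (hf β hβ).1) hmono,
           h₂.2.2 δ h0 hδ f (fun β hβ => (hf β hβ).2) hmono⟩

theorem stat_inter_club (hunc : ℵ₀ < κ) {S T C : Set (Set Ordinal.{0})}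
    (hT : IsStatIn κ S T) (hC : IsClubIn κ S C) : IsStatIn κ S (T ∩ C) := by
  refine ⟨fun x hx => hT.1 hx.1, fun C' hC' => ?_⟩
  obtain ⟨x, hxT, hxCC'⟩ := hT.2 _ (club_inter hunc hC hC')
  exact ⟨x, ⟨hxT, hxCC'.1⟩, hxCC'.2⟩
theorem nonempty_club (hreg : κ.IsRegular) (hunc : ℵ₀ < κ) (hle : κ ≤ lam) :
    IsClubIn κ (Pk κ lam) {c | c ∈ Pk κ lam ∧ c.Nonempty} := by
  have hlam0 : (0 : Ordinal) < lam.ord := by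
    have : Ordinal.omega0 ≤ lam.ord := by
      rw [← Cardinal.ord_aleph0]; exact Cardinal.ord_le_ord.2 (hunc.le.trans hle)
    exact lt_of_lt_of_le Ordinal.omega0_pos this
  refine ⟨fun c hc => hc.1, ?_, ?_⟩
  · intro a ha
    refine ⟨insert 0 a, ⟨⟨?_, ?_⟩, ⟨0, Set.mem_insert _ _⟩⟩, Set.subset_insert _ _⟩
    · intro α hα
      rcases Set.mem_insert_iff.1 hα with rfl | h
      · exact hlam0
      · exact ha.1 α h
    · refine Cardinal.mk_insert_le.trans_lt ?_
      exact Cardinal.add_lt_of_lt (isRegular_lift hreg).1 ha.2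
        (lt_of_lt_of_le Cardinal.one_lt_aleph0 (isRegular_lift hreg).1)
  · intro δ h0 hδ f hf hmono
    refine ⟨(Pk_club hreg).2.2 δ h0 hδ f (fun β hβ => (hf β hβ).1) hmono, ?_⟩
    obtain ⟨x, hx⟩ := (hf 0 h0).2
    exact ⟨x, Set.mem_biUnion h0 hx⟩

theorem diag_club (hreg : κ.IsRegular) (hunc : ℵ₀ < κ)
    {E : Ordinal → Set (Set Ordinal.{0})}
    (hE : ∀ γ, IsClubIn κ (Pk κ lam) (E γ)) :
    IsClubIn κ (Pk κ lam) {c | c ∈ Pk κ lam ∧ ∀ γ ∈ c, c ∈ E γ} := by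
  have ech : ∀ (γ : Ordinal) (b : Set Ordinal), ∃ c, b ∈ Pk κ lam → c ∈ E γ ∧ b ⊆ c := by
    intro γ b
    by_cases h : b ∈ Pk κ lam
    · obtain ⟨c, hc, hbc⟩ := (hE γ).2.1 b h; exact ⟨c, fun _ => ⟨hc, hbc⟩⟩
    · exact ⟨b, fun h' => absurd h' h⟩
  choose ch hch using ech
  refine ⟨fun c hc => hc.1, ?_, ?_⟩
  · intro a ha
    set u : ℕ → Set Ordinal := fun n =>
      Nat.rec a (fun _ b => b ∪ ⋃ γ ∈ b, ch γ b) n with hu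
    have hustep : ∀ n, u (n + 1) = u n ∪ ⋃ γ ∈ u n, ch γ (u n) := fun n => rfl
    have humem : ∀ n, u n ∈ Pk κ lam := by
      intro n
      induction n with
      | zero => exact ha
      | succ n ih =>
        rw [hustep]
        constructor
        · intro α hα
          rcases hα with h | h
          · exact ih.1 α h
          · obtain ⟨γ, hγ, hα⟩ := Set.mem_iUnion₂.1 h
            exact (((hE γ).1 (hch γ (u n) ih).1).1) α hα
        · refine (Cardinal.mk_union_le _ _).trans_lt ?_
          refine Cardinal.add_lt_of_lt (isRegular_lift hreg).1 ih.2 ?_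
          exact mk_biUnion_lt hreg ih.2 fun γ hγ => ((hE γ).1 (hch γ (u n) ih).1).2
    have humono : ∀ n, u n ⊆ u (n + 1) := fun n => by
      rw [hustep]; exact Set.subset_union_left
    have hm : ∀ {m n : ℕ}, m ≤ n → u m ⊆ u n := by
      intro m n h
      induction h with
      | refl => exact subset_rfl
      | step _ ih => exact ih.trans (humono _)
    refine ⟨⋃ n, u n, ⟨club_omega_union hunc (Pk_club hreg) u humem humono, ?_⟩,
      Set.subset_iUnion u 0⟩
    intro γ hγ
    obtain ⟨n₀, hn₀⟩ := Set.mem_iUnion.1 hγ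
    have hsub1 : ∀ k, ch γ (u (n₀ + k)) ⊆ u (n₀ + k + 1) := by
      intro k
      rw [hustep]
      intro x hx
      exact Set.mem_union_right _ (Set.mem_biUnion (hm (Nat.le_add_right n₀ k) hn₀) hx)
    have hchain : ∀ k, ch γ (u (n₀ + k)) ⊆ ch γ (u (n₀ + k + 1)) := fun k =>
      (hsub1 k).trans (hch γ (u (n₀ + k + 1)) (humem (n₀ + k + 1))).2
    have hcm : ∀ k, ch γ (u (n₀ + k)) ∈ E γ := fun k => (hch γ _ (humem _)).1
    have hkey := club_omega_union hunc (hE γ) (fun k => ch γ (u (n₀ + k))) hcm hchain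
    have heq : (⋃ k, ch γ (u (n₀ + k))) = ⋃ n, u n := by
      apply Set.Subset.antisymm
      · exact Set.iUnion_mono' fun k => ⟨n₀ + k + 1, hsub1 k⟩
      · intro x hx
        obtain ⟨m, hmx⟩ := Set.mem_iUnion.1 hx
        rcases Nat.le_total m n₀ with h | h
        · exact Set.mem_iUnion.2 ⟨0, (hch γ (u (n₀ + 0)) (humem _)).2 (hm (h.trans (Nat.le_add_right _ _)) hmx)⟩
        · exact Set.mem_iUnion.2 ⟨m - n₀, (hch γ _ (humem _)).2 (by
            rwa [Nat.add_sub_cancel' h])⟩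
    rw [heq] at hkey
    exact hkey
  · intro δ h0 hδ f hf hmono
    have hPk : (⋃ β ∈ Set.Iio δ, f β) ∈ Pk κ lam :=
      (Pk_club hreg).2.2 δ h0 hδ f (fun β hβ => (hf β hβ).1) hmono
    refine ⟨hPk, ?_⟩
    intro γ hγ
    obtain ⟨β₀, hβ₀δ, hγβ₀⟩ := Set.mem_iUnion₂.1 hγ
    have hβ₀δ' : β₀ < δ := hβ₀δ
    set δ' := δ - β₀ with hδ'
    have hsum : β₀ + δ' = δ := Ordinal.add_sub_cancel_of_le hβ₀δ'.le
    have h0' : 0 < δ' := by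
      rw [pos_iff_ne_zero]
      intro h
      exact absurd (Ordinal.sub_eq_zero_iff_le.1 h) (not_le.2 hβ₀δ')
    have hcard' : δ'.card < κ :=
      lt_of_le_of_lt (Ordinal.card_le_card (Ordinal.sub_le_self δ β₀)) hδ
    have key := (hE γ).2.2 δ' h0' hcard' (fun β => f (β₀ + β)) ?_ ?_
    · convert key using 1
      apply Set.Subset.antisymm
      · intro x hx
        obtain ⟨β, hβ, hxβ⟩ := Set.mem_iUnion₂.1 hx
        have hβδ : (β : Ordinal) < δ := hβ
        rcases le_total β β₀ with h | h
        · have hx0 : x ∈ f (β₀ + 0) := by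
            rw [add_zero]; exact hmono β β₀ h hβ₀δ' hxβ
          exact Set.mem_biUnion h0' hx0
        · have hlt : β - β₀ < δ' := by
            rw [← add_lt_add_iff_left β₀, Ordinal.add_sub_cancel_of_le h, hsum]
            exact hβδ
          have hx' : x ∈ f (β₀ + (β - β₀)) := by
            rw [Ordinal.add_sub_cancel_of_le h]; exact hxβ
          exact Set.mem_biUnion hlt hx'
      · intro x hx
        obtain ⟨β, hβ, hxβ⟩ := Set.mem_iUnion₂.1 hx
        have hlt : β₀ + β < δ := by rw [← hsum]; exact (add_lt_add_iff_left β₀).2 hβ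
        exact Set.mem_biUnion hlt hxβ
    · intro β hβ
      have hβ₀β : β₀ + β < δ := by rw [← hsum]; exact (add_lt_add_iff_left β₀).2 hβ
      have hmem : γ ∈ f (β₀ + β) := hmono β₀ (β₀ + β) le_self_add hβ₀β hγβ₀
      exact (hf (β₀ + β) hβ₀β).2 γ hmem
    · intro β β' hββ' hβ'
      refine hmono (β₀ + β) (β₀ + β') ((add_le_add_iff_left β₀).2 hββ') ?_
      rw [← hsum]; exact (add_lt_add_iff_left β₀).2 hβ'
theorem lam_pairing (hunc : ℵ₀ < κ) (hle : κ ≤ lam) :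
    ∃ p : Ordinal → Ordinal → Ordinal,
      (∀ γ ξ, γ < lam.ord → ξ < lam.ord → p γ ξ < lam.ord) ∧
      (∀ γ ξ γ' ξ', γ < lam.ord → ξ < lam.ord → γ' < lam.ord → ξ' < lam.ord →
        p γ ξ = p γ' ξ' → γ = γ' ∧ ξ = ξ') := by
  have hlaminf : ℵ₀ ≤ lam := hunc.le.trans hle
  have hcard : #(Set.Iio lam.ord × Set.Iio lam.ord : Type 1) = #(Set.Iio lam.ord) := by
    rw [Cardinal.mk_prod, Cardinal.lift_id, Ordinal.mk_Iio_ordinal,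
      Cardinal.card_ord, ← Cardinal.lift_mul, Cardinal.mul_eq_self hlaminf]
  obtain ⟨e⟩ := Cardinal.eq.1 hcard
  refine ⟨fun γ ξ =>
    if h : γ < lam.ord ∧ ξ < lam.ord then (e (⟨γ, h.1⟩, ⟨ξ, h.2⟩) : Ordinal) else 0, ?_, ?_⟩
  · intro γ ξ hγ hξ
    dsimp only
    rw [dif_pos ⟨hγ, hξ⟩]
    exact (e _).2
  · intro γ ξ γ' ξ' hγ hξ hγ' hξ' h
    dsimp only at h
    rw [dif_pos ⟨hγ, hξ⟩, dif_pos ⟨hγ', hξ'⟩] at h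
    have h2 := e.injective (Subtype.coe_injective h)
    constructor
    · exact congrArg (fun z : Set.Iio lam.ord × Set.Iio lam.ord => (z.1 : Ordinal)) h2
    · exact congrArg (fun z : Set.Iio lam.ord × Set.Iio lam.ord => (z.2 : Ordinal)) h2

theorem pair_club (hreg : κ.IsRegular) (hunc : ℵ₀ < κ)
    (p : Ordinal → Ordinal → Ordinal)
    (hpinj : ∀ γ ξ γ' ξ', γ < lam.ord → ξ < lam.ord → γ' < lam.ord → ξ' < lam.ord →
        p γ ξ = p γ' ξ' → γ = γ' ∧ ξ = ξ')
    (hplt : ∀ γ ξ, γ < lam.ord → ξ < lam.ord → p γ ξ < lam.ord) :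
    IsClubIn κ (Pk κ lam)
      {c | c ∈ Pk κ lam ∧ (∀ γ ∈ c, ∀ ξ ∈ c, p γ ξ ∈ c) ∧
        ∀ γ ξ, γ < lam.ord → ξ < lam.ord → p γ ξ ∈ c → γ ∈ c ∧ ξ ∈ c} := by
  have h1κ : (1 : Cardinal) < Cardinal.lift.{1} κ :=
    lt_of_lt_of_le Cardinal.one_lt_aleph0 (isRegular_lift hreg).1
  set cmp : Ordinal → Set Ordinal := fun η =>
    {γ | ∃ ξ, γ < lam.ord ∧ ξ < lam.ord ∧ p γ ξ = η} ∪
    {ξ | ∃ γ, γ < lam.ord ∧ ξ < lam.ord ∧ p γ ξ = η} with hcmp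
  have hcmplt : ∀ η, #(cmp η) < Cardinal.lift.{1} κ := by
    intro η
    refine (Cardinal.mk_union_le _ _).trans_lt
      (Cardinal.add_lt_of_lt (isRegular_lift hreg).1 ?_ ?_)
    · refine lt_of_le_of_lt ?_ h1κ
      refine Set.Subsingleton.cardinalMk_le_one ?_
      rintro γ₁ ⟨ξ₁, hγ₁, hξ₁, hp₁⟩ γ₂ ⟨ξ₂, hγ₂, hξ₂, hp₂⟩
      exact (hpinj γ₁ ξ₁ γ₂ ξ₂ hγ₁ hξ₁ hγ₂ hξ₂ (hp₁.trans hp₂.symm)).1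
    · refine lt_of_le_of_lt ?_ h1κ
      refine Set.Subsingleton.cardinalMk_le_one ?_
      rintro ξ₁ ⟨γ₁, hγ₁, hξ₁, hp₁⟩ ξ₂ ⟨γ₂, hγ₂, hξ₂, hp₂⟩
      exact (hpinj γ₁ ξ₁ γ₂ ξ₂ hγ₁ hξ₁ hγ₂ hξ₂ (hp₁.trans hp₂.symm)).2
  have hcmpsub : ∀ η, ∀ α ∈ cmp η, α < lam.ord := by
    rintro η α (⟨ξ, h, _, _⟩ | ⟨γ, _, h, _⟩) <;> exact h
  set st : Set Ordinal → Set Ordinal := fun b =>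
    b ∪ (⋃ γ ∈ b, ⋃ ξ ∈ b, {p γ ξ}) ∪ ⋃ η ∈ b, cmp η with hst
  have hstPk : ∀ b ∈ Pk κ lam, st b ∈ Pk κ lam := by
    intro b hb
    constructor
    · rintro α (h | h)
      · rcases h with h | h
        · exact hb.1 α h
        · obtain ⟨γ, hγ, h⟩ := Set.mem_iUnion₂.1 h
          obtain ⟨ξ, hξ, h⟩ := Set.mem_iUnion₂.1 h
          rw [Set.mem_singleton_iff] at h
          rw [h]
          exact hplt γ ξ (hb.1 γ hγ) (hb.1 ξ hξ)
      · obtain ⟨η, hη, h⟩ := Set.mem_iUnion₂.1 h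
        exact hcmpsub η α h
    · refine (Cardinal.mk_union_le _ _).trans_lt
        (Cardinal.add_lt_of_lt (isRegular_lift hreg).1
          ((Cardinal.mk_union_le _ _).trans_lt
            (Cardinal.add_lt_of_lt (isRegular_lift hreg).1 hb.2 ?_)) ?_)
      · refine mk_biUnion_lt hreg hb.2 fun γ _ => ?_
        refine mk_biUnion_lt hreg hb.2 fun ξ _ => ?_
        rw [Cardinal.mk_singleton]
        exact h1κ
      · exact mk_biUnion_lt hreg hb.2 fun η _ => hcmplt η
  have hbst : ∀ b, b ⊆ st b := fun b => Set.subset_union_left.trans Set.subset_union_left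
  refine ⟨fun c hc => hc.1, ?_, ?_⟩
  · intro a ha
    set u : ℕ → Set Ordinal := fun n => Nat.rec a (fun _ b => st b) n with hu
    have hustep : ∀ n, u (n + 1) = st (u n) := fun n => rfl
    have humem : ∀ n, u n ∈ Pk κ lam := by
      intro n
      induction n with
      | zero => exact ha
      | succ n ih => rw [hustep]; exact hstPk _ ih
    have humono : ∀ n, u n ⊆ u (n + 1) := fun n => by rw [hustep]; exact hbst _
    have hm : ∀ {m n : ℕ}, m ≤ n → u m ⊆ u n := by
      intro m n h
      induction h with
      | refl => exact subset_rfl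
      | step _ ih => exact ih.trans (humono _)
    refine ⟨⋃ n, u n, ⟨club_omega_union hunc (Pk_club hreg) u humem humono, ?_, ?_⟩,
      Set.subset_iUnion u 0⟩
    · intro γ hγ ξ hξ
      obtain ⟨n₁, hn₁⟩ := Set.mem_iUnion.1 hγ
      obtain ⟨n₂, hn₂⟩ := Set.mem_iUnion.1 hξ
      have hγ' : γ ∈ u (max n₁ n₂) := hm (Nat.le_max_left _ _) hn₁
      have hξ' : ξ ∈ u (max n₁ n₂) := hm (Nat.le_max_right _ _) hn₂
      refine Set.mem_iUnion.2 ⟨max n₁ n₂ + 1, ?_⟩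
      rw [hustep]
      exact Set.mem_union_left _ (Set.mem_union_right _
        (Set.mem_biUnion hγ' (Set.mem_biUnion hξ' rfl)))
    · intro γ ξ hγlt hξlt hpmem
      obtain ⟨n, hn⟩ := Set.mem_iUnion.1 hpmem
      have h1 : γ ∈ cmp (p γ ξ) := Or.inl ⟨ξ, hγlt, hξlt, rfl⟩
      have h2 : ξ ∈ cmp (p γ ξ) := Or.inr ⟨γ, hγlt, hξlt, rfl⟩
      constructor
      · refine Set.mem_iUnion.2 ⟨n + 1, ?_⟩
        rw [hustep]
        exact Set.mem_union_right _ (Set.mem_biUnion hn h1)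
      · refine Set.mem_iUnion.2 ⟨n + 1, ?_⟩
        rw [hustep]
        exact Set.mem_union_right _ (Set.mem_biUnion hn h2)
  · intro δ h0 hδ f hf hmono
    refine ⟨(Pk_club hreg).2.2 δ h0 hδ f (fun β hβ => (hf β hβ).1) hmono, ?_, ?_⟩
    · intro γ hγ ξ hξ
      obtain ⟨β₁, hβ₁, hγ'⟩ := Set.mem_iUnion₂.1 hγ
      obtain ⟨β₂, hβ₂, hξ'⟩ := Set.mem_iUnion₂.1 hξ
      have hβ : max β₁ β₂ < δ := max_lt hβ₁ hβ₂
      refine Set.mem_biUnion hβ ((hf _ hβ).2.1 γ ?_ ξ ?_)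
      · exact hmono β₁ _ (le_max_left _ _) hβ hγ'
      · exact hmono β₂ _ (le_max_right _ _) hβ hξ'
    · intro γ ξ hγlt hξlt hpmem
      obtain ⟨β, hβ, hp'⟩ := Set.mem_iUnion₂.1 hpmem
      obtain ⟨h1, h2⟩ := (hf β hβ).2.2 γ ξ hγlt hξlt hp'
      exact ⟨Set.mem_biUnion hβ h1, Set.mem_biUnion hβ h2⟩

theorem fodor (hreg : κ.IsRegular) (hunc : ℵ₀ < κ) {S : Set (Set Ordinal.{0})}
    (hS : IsStatIn κ (Pk κ lam) S) (g : Set Ordinal → Ordinal)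
    (hg : ∀ a ∈ S, g a ∈ a) :
    ∃ γ < lam.ord, IsStatIn κ (Pk κ lam) {a | a ∈ S ∧ g a = γ} := by
  by_contra hcon
  push_neg at hcon
  have hnot : ∀ γ, ∃ E, IsClubIn κ (Pk κ lam) E ∧
      (γ < lam.ord → {a | a ∈ S ∧ g a = γ} ∩ E = ∅) := by
    intro γ
    by_cases hγ : γ < lam.ord
    · have hns := hcon γ hγ
      unfold IsStatIn at hns
      push_neg at hns
      obtain ⟨C, hC, hne⟩ := hns fun a ha => hS.1 ha.1
      exact ⟨C, hC, fun _ => hne⟩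
    · exact ⟨Pk κ lam, Pk_club hreg, fun h => absurd h hγ⟩
  choose E hEclub hEdisj using hnot
  obtain ⟨a, haS, haD⟩ := hS.2 _ (diag_club hreg hunc hEclub)
  have hga : g a ∈ a := hg a haS
  have hgalt : g a < lam.ord := haD.1.1 _ hga
  have hmem : a ∈ {b | b ∈ S ∧ g b = g a} ∩ E (g a) := ⟨⟨haS, rfl⟩, haD.2 _ hga⟩
  rw [hEdisj (g a) hgalt] at hmem
  exact hmem

theorem empty_thin (hreg : κ.IsRegular) : IsThin κ lam (fun _ => (∅ : Set Ordinal)) := by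
  refine ⟨Pk κ lam, Pk_club hreg, ?_⟩
  intro c hc
  refine lt_of_le_of_lt (Set.Subsingleton.cardinalMk_le_one ?_)
    (lt_of_lt_of_le Cardinal.one_lt_aleph0 (isRegular_lift hreg).1)
  rintro x ⟨a, ha, hca, rfl⟩ y ⟨b, hb, hcb, rfl⟩
  rfl

end IITAux

theorem IIT_normal_ideal (κ lam : Cardinal.{0})
    (hreg : κ.IsRegular) (hunc : ℵ₀ < κ) (hle : κ ≤ lam) :
    (∀ A, A ⊆ Pk κ lam → ¬ IsStatIn κ (Pk κ lam) A → A ∈ IIT κ lam) ∧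
    (∀ A ∈ IIT κ lam, ∀ B, B ⊆ A → B ∈ IIT κ lam) ∧
    (∀ A ∈ IIT κ lam, ∀ B ∈ IIT κ lam, A ∪ B ∈ IIT κ lam) ∧
    (∀ D, D ⊆ Pk κ lam → ∀ g : Set Ordinal → Ordinal,
      (∀ a ∈ D, a.Nonempty → g a ∈ a) →
      (∀ γ < lam.ord, {a ∈ D | g a = γ} ∈ IIT κ lam) →
      D ∈ IIT κ lam) := by
  refine ⟨?_, ?_, ?_, ?_⟩
  · -- nonstationary sets
    intro A hA hns
    refine ⟨hA, fun _ => ∅, fun a _ => Set.empty_subset a, IITAux.empty_thin hreg, ?_⟩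
    intro S hSA hstat
    exfalso
    unfold IsStatIn at hns
    push_neg at hns
    obtain ⟨C, hC, hemem⟩ := hns hA
    obtain ⟨x, hxS, hxC⟩ := hstat.2 C hC
    exact Set.eq_empty_iff_forall_notMem.1 hemem x ⟨hSA hxS, hxC⟩
  · -- subsets
    rintro A ⟨hA, d, hlist, hthin, heff⟩ B hBA
    exact ⟨hBA.trans hA, d, hlist, hthin, fun S hS hstat => heff S (hS.trans hBA) hstat⟩
  · -- unions
    rintro A ⟨hA, d, hdl, hdt, hde⟩ B ⟨hB, e, hel, het, hee⟩
    classical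
    set f : Set Ordinal → Set Ordinal := fun a => if a ∈ A then d a else e a with hf
    refine ⟨Set.union_subset hA hB, f, ?_, ?_, ?_⟩
    · intro a ha
      by_cases h : a ∈ A
      · have hfa : f a = d a := if_pos h
        rw [hfa]; exact hdl a ha
      · have hfa : f a = e a := if_neg h
        rw [hfa]; exact hel a ha
    · obtain ⟨C₁, hC₁, ht₁⟩ := hdt
      obtain ⟨C₂, hC₂, ht₂⟩ := het
      refine ⟨C₁ ∩ C₂, IITAux.club_inter hunc hC₁ hC₂, ?_⟩
      intro c hc
      have hsub : {x : Set Ordinal | ∃ a ∈ Pk κ lam, c ⊆ a ∧ x = f a ∩ c} ⊆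
          {x : Set Ordinal | ∃ a ∈ Pk κ lam, c ⊆ a ∧ x = d a ∩ c} ∪
          {x : Set Ordinal | ∃ a ∈ Pk κ lam, c ⊆ a ∧ x = e a ∩ c} := by
        rintro x ⟨a, ha, hca, rfl⟩
        by_cases h : a ∈ A
        · exact Or.inl ⟨a, ha, hca, by rw [show f a = d a from if_pos h]⟩
        · exact Or.inr ⟨a, ha, hca, by rw [show f a = e a from if_neg h]⟩
      refine (Cardinal.mk_le_mk_of_subset hsub).trans_lt ?_
      exact (Cardinal.mk_union_le _ _).trans_lt
        (Cardinal.add_lt_of_lt (IITAux.isRegular_lift hreg).1 (ht₁ c hc.1) (ht₂ c hc.2))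
    · intro S hSAB hstat
      by_cases hSA : IsStatIn κ (Pk κ lam) (S ∩ A)
      · obtain ⟨a, haSA, b, hbSA, hab, hne⟩ := hde (S ∩ A) Set.inter_subset_right hSA
        refine ⟨a, haSA.1, b, hbSA.1, hab, ?_⟩
        rw [show f a = d a from if_pos haSA.2, show f b = d b from if_pos hbSA.2]
        exact hne
      · unfold IsStatIn at hSA
        push_neg at hSA
        obtain ⟨C, hC, hem⟩ := hSA (Set.inter_subset_left.trans hstat.1)
        have hstat' : IsStatIn κ (Pk κ lam) (S \ A) := by
          refine ⟨Set.diff_subset.trans hstat.1, ?_⟩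
          intro C' hC'
          obtain ⟨x, hxS, hxCC'⟩ := hstat.2 (C ∩ C') (IITAux.club_inter hunc hC hC')
          have hxA : x ∉ A := fun hxA =>
            Set.eq_empty_iff_forall_notMem.1 hem x ⟨⟨hxS, hxA⟩, hxCC'.1⟩
          exact ⟨x, ⟨hxS, hxA⟩, hxCC'.2⟩
        have hsubB : S \ A ⊆ B := fun x hx => (hSAB hx.1).resolve_left hx.2
        obtain ⟨a, haS, b, hbS, hab, hne⟩ := hee (S \ A) hsubB hstat'
        refine ⟨a, haS.1, b, hbS.1, hab, ?_⟩
        rw [show f a = e a from if_neg haS.2, show f b = e b from if_neg hbS.2]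
        exact hne
  · -- normality
    intro D hD g hg hpre
    classical
    obtain ⟨p, hplt, hpinj⟩ := IITAux.lam_pairing hunc hle
    have hD' : ∀ γ : Ordinal, ∃ d, IsList κ lam d ∧ IsThin κ lam d ∧
        (γ < lam.ord → IsEffable κ lam d {a | a ∈ D ∧ g a = γ}) := by
      intro γ
      by_cases h : γ < lam.ord
      · obtain ⟨_, dd, h1, h2, h3⟩ := hpre γ h
        exact ⟨dd, h1, h2, fun _ => h3⟩
      · exact ⟨fun _ => ∅, fun a _ => Set.empty_subset a, IITAux.empty_thin hreg,
          fun h' => absurd h' h⟩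
    choose dfun hdlist hdthin hdeff using hD'
    have hEex : ∀ γ, ∃ E, IsClubIn κ (Pk κ lam) E ∧ ∀ c ∈ E,
        #{x : Set Ordinal | ∃ a ∈ Pk κ lam, c ⊆ a ∧ x = dfun γ a ∩ c} < Cardinal.lift.{1} κ :=
      fun γ => hdthin γ
    choose Efun hEclub hEthin using hEex
    have hCpclub := IITAux.pair_club hreg hunc p hpinj hplt
    have hCΔclub := IITAux.diag_club hreg hunc hEclub
    set Cp := {c | c ∈ Pk κ lam ∧ (∀ γ ∈ c, ∀ ξ ∈ c, p γ ξ ∈ c) ∧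
        ∀ γ ξ, γ < lam.ord → ξ < lam.ord → p γ ξ ∈ c → γ ∈ c ∧ ξ ∈ c} with hCp
    set CΔ := {c | c ∈ Pk κ lam ∧ ∀ γ ∈ c, c ∈ Efun γ} with hCΔ
    set Cstar := CΔ ∩ Cp with hCstar
    have hCstarclub : IsClubIn κ (Pk κ lam) Cstar := IITAux.club_inter hunc hCΔclub hCpclub
    set f : Set Ordinal → Set Ordinal := fun a =>
      if h : a ∈ D ∧ a.Nonempty then {η ∈ a | ∃ ξ ∈ dfun (g a) a, η = p (g a) ξ} else ∅
      with hfdef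
    have hflist : IsList κ lam f := by
      intro a ha
      by_cases h : a ∈ D ∧ a.Nonempty
      · rw [show f a = {η ∈ a | ∃ ξ ∈ dfun (g a) a, η = p (g a) ξ} from dif_pos h]
        exact Set.sep_subset _ _
      · rw [show f a = ∅ from dif_neg h]
        exact Set.empty_subset a
    have htrace : ∀ c, c ∈ Cp → ∀ a ∈ Pk κ lam, c ⊆ a → a ∈ D ∧ a.Nonempty →
        f a ∩ c = if g a ∈ c then {η | ∃ ξ ∈ dfun (g a) a ∩ c, η = p (g a) ξ} else ∅ := by
      intro c hcp a haPk hca ha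
      have hfa : f a = {η ∈ a | ∃ ξ ∈ dfun (g a) a, η = p (g a) ξ} := dif_pos ha
      have hgalt : g a < lam.ord := haPk.1 _ (hg a ha.1 ha.2)
      have hdsub : dfun (g a) a ⊆ a := hdlist (g a) a haPk
      by_cases hgc : g a ∈ c
      · rw [if_pos hgc, hfa]
        apply Set.Subset.antisymm
        · rintro η ⟨⟨hηa, ξ, hξ, rfl⟩, hηc⟩
          exact ⟨ξ, ⟨hξ, (hcp.2.2 (g a) ξ hgalt (haPk.1 _ (hdsub hξ)) hηc).2⟩, rfl⟩
        · rintro η ⟨ξ, ⟨hξd, hξc⟩, rfl⟩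
          have hpc : p (g a) ξ ∈ c := hcp.2.1 _ hgc _ hξc
          exact ⟨⟨hca hpc, ξ, hξd, rfl⟩, hpc⟩
      · rw [if_neg hgc, hfa]
        apply Set.eq_empty_iff_forall_notMem.2
        rintro η ⟨⟨hηa, ξ, hξ, rfl⟩, hηc⟩
        exact hgc (hcp.2.2 (g a) ξ hgalt (haPk.1 _ (hdsub hξ)) hηc).1
    have hfthin : IsThin κ lam f := by
      refine ⟨Cstar, hCstarclub, ?_⟩
      intro c hc
      have hsub : {x : Set Ordinal | ∃ a ∈ Pk κ lam, c ⊆ a ∧ x = f a ∩ c} ⊆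
          insert ∅ (⋃ γ ∈ c, (fun s : Set Ordinal => {η | ∃ ξ ∈ s, η = p γ ξ}) ''
            {x : Set Ordinal | ∃ a ∈ Pk κ lam, c ⊆ a ∧ x = dfun γ a ∩ c}) := by
        rintro x ⟨a, ha, hca, rfl⟩
        by_cases hD2 : a ∈ D ∧ a.Nonempty
        · rw [htrace c hc.2 a ha hca hD2]
          by_cases hgc : g a ∈ c
          · rw [if_pos hgc]
            refine Set.mem_insert_of_mem _ (Set.mem_biUnion hgc ?_)
            exact ⟨dfun (g a) a ∩ c, ⟨a, ha, hca, rfl⟩, rfl⟩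
          · rw [if_neg hgc]; exact Set.mem_insert _ _
        · rw [show f a = ∅ from dif_neg hD2, Set.empty_inter]
          exact Set.mem_insert _ _
      refine (Cardinal.mk_le_mk_of_subset hsub).trans_lt ?_
      refine Cardinal.mk_insert_le.trans_lt
        (Cardinal.add_lt_of_lt (IITAux.isRegular_lift hreg).1 ?_
          (lt_of_lt_of_le Cardinal.one_lt_aleph0 (IITAux.isRegular_lift hreg).1))
      refine IITAux.mk_biUnion_lt hreg hc.1.1.2 ?_
      intro γ hγc
      exact Cardinal.mk_image_le.trans_lt (hEthin γ c (hc.1.2 γ hγc))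
    refine ⟨hD, f, hflist, hfthin, ?_⟩
    intro S hSD hstat
    have hSN := IITAux.stat_inter_club hunc hstat (IITAux.nonempty_club hreg hunc hle)
    obtain ⟨γ, hγlt, hstatγ⟩ := IITAux.fodor hreg hunc hSN g
      (fun a ha => hg a (hSD ha.1) ha.2.2)
    have hT := IITAux.stat_inter_club hunc hstatγ hCstarclub
    have hTsub : ({a | a ∈ S ∩ {c | c ∈ Pk κ lam ∧ c.Nonempty} ∧ g a = γ} ∩ Cstar) ⊆
        {a | a ∈ D ∧ g a = γ} := fun a ha => ⟨hSD ha.1.1.1, ha.1.2⟩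
    obtain ⟨a, haT, b, hbT, hab, hne⟩ := hdeff γ hγlt _ hTsub hT
    have haPk : a ∈ Pk κ lam := haT.1.1.2.1
    have hbPk : b ∈ Pk κ lam := hbT.1.1.2.1
    have haD : a ∈ D ∧ a.Nonempty := ⟨hSD haT.1.1.1, haT.1.1.2.2⟩
    have hbD : b ∈ D ∧ b.Nonempty := ⟨hSD hbT.1.1.1, hbT.1.1.2.2⟩
    have hga : g a = γ := haT.1.2
    have hgb : g b = γ := hbT.1.2
    have hγa : γ ∈ a := by rw [← hga]; exact hg a haD.1 haD.2
    have hfa : f a = {η | ∃ ξ ∈ dfun γ a, η = p γ ξ} := by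
      have h1 := htrace a haT.2.2 a haPk subset_rfl haD
      rw [hga, if_pos hγa, Set.inter_eq_self_of_subset_left (hflist a haPk),
        Set.inter_eq_self_of_subset_left (hdlist γ a haPk)] at h1
      exact h1
    have hfb : f b ∩ a = {η | ∃ ξ ∈ dfun γ b ∩ a, η = p γ ξ} := by
      have h1 := htrace a haT.2.2 b hbPk hab hbD
      rw [hgb, if_pos hγa] at h1
      exact h1
    refine ⟨a, haT.1.1.1, b, hbT.1.1.1, hab, ?_⟩
    intro heq
    refine hne ?_
    have himg : {η | ∃ ξ ∈ dfun γ a, η = p γ ξ} = {η | ∃ ξ ∈ dfun γ b ∩ a, η = p γ ξ} := by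
      rw [← hfa, ← hfb]; exact heq
    apply Set.Subset.antisymm
    · intro ξ hξ
      have hmem : p γ ξ ∈ {η | ∃ ξ ∈ dfun γ b ∩ a, η = p γ ξ} := by
        rw [← himg]; exact ⟨ξ, hξ, rfl⟩
      obtain ⟨ξ', hξ', hpp⟩ := hmem
      have hξlt : ξ < lam.ord := haPk.1 _ (hdlist γ a haPk hξ)
      have hξ'lt : ξ' < lam.ord := hbPk.1 _ (hdlist γ b hbPk hξ'.1)
      rw [(hpinj γ ξ γ ξ' hγlt hξlt hγlt hξ'lt hpp).2]
      exact hξ'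
    · intro ξ hξ
      have hmem : p γ ξ ∈ {η | ∃ ξ ∈ dfun γ a, η = p γ ξ} := by
        rw [himg]; exact ⟨ξ, hξ, rfl⟩
      obtain ⟨ξ', hξ', hpp⟩ := hmem
      have hξlt : ξ < lam.ord := haPk.1 _ hξ.2
      have hξ'lt : ξ' < lam.ord := haPk.1 _ (hdlist γ a haPk hξ')
      rw [(hpinj γ ξ γ ξ' hγlt hξlt hγlt hξ'lt hpp).2]
      exact hξ'
end
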